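/- For every vertex u ∈ V and every integer g ≥ 1, the probability that the g-neighborhood of u in G' contains a cycle is at most 3·D^{5g}/Δ. -/

import Mathlib

open MeasureTheory ProbabilityTheory

/-- The random subgraph of `G` determined by keeping the edges `e` with `B e ω = true`. -/
def keptSubgraph {V : Type*} {Ω : Type*} (G : SimpleGraph V) (B : Sym2 V → Ω → Bool)
    (ω : Ω) : SimpleGraph V :=
  SimpleGraph.fromEdgeSet {e | e ∈ G.edgeSet ∧ B e ω = true}

/-- The `g`-neighborhood of `x` in `H` (the subgraph of `H` induced on the vertices at
`H`-distance at most `g` from `x`) contains a cycle. -/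
def ballHasCycle {V : Type*} (H : SimpleGraph V) (x : V) (g : ℕ) : Prop :=
  ¬ (SimpleGraph.induce {v | H.Reachable x v ∧ H.dist x v ≤ g} H).IsAcyclic

open scoped ENNReal
open SimpleGraph Walk

namespace Stmt14Aux


variable {V : Type*} {H : SimpleGraph V} {u : V} {ball : Set V} {d : V → ℕ} {pa : V → V}

def pWalk (h0 : ∀ v ∈ ball, d v = 0 → v = u) (hu0 : d u = 0)
    (hpa : ∀ v, v ∈ ball → v ≠ u → H.Adj (pa v) v ∧ pa v ∈ ball ∧ d (pa v) + 1 = d v) :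
    (n : ℕ) → (v : V) → v ∈ ball → d v = n → H.Walk v u
  | 0, v, hv, hd => SimpleGraph.Walk.nil.copy (h0 v hv hd).symm rfl
  | (n+1), v, hv, hd =>
    have hvu : v ≠ u := fun h => by rw [h, hu0] at hd; exact Nat.succ_ne_zero n hd.symm
    SimpleGraph.Walk.cons ((hpa v hv hvu).1.symm)
      (pWalk h0 hu0 hpa n (pa v) (hpa v hv hvu).2.1
        (by have := (hpa v hv hvu).2.2; omega))

variable (h0 : ∀ v ∈ ball, d v = 0 → v = u) (hu0 : d u = 0)
    (hpa : ∀ v, v ∈ ball → v ≠ u → H.Adj (pa v) v ∧ pa v ∈ ball ∧ d (pa v) + 1 = d v)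

lemma pWalk_length : ∀ (n : ℕ) (v : V) (hv : v ∈ ball) (hd : d v = n),
    (pWalk h0 hu0 hpa n v hv hd).length = n
  | 0, v, hv, hd => by simp [pWalk]
  | (n+1), v, hv, hd => by
    rw [pWalk]
    simp [pWalk_length n]

lemma pWalk_support : ∀ (n : ℕ) (v : V) (hv : v ∈ ball) (hd : d v = n),
    ∀ w ∈ (pWalk h0 hu0 hpa n v hv hd).support, w ∈ ball ∧ d w ≤ n
  | 0, v, hv, hd => by
    intro w hw
    simp [pWalk] at hw
    subst hw
    have := h0 v hv hd
    subst this
    exact ⟨hv, by omega⟩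
  | (n+1), v, hv, hd => by
    intro w hw
    rw [pWalk] at hw
    simp only [Walk.support_cons, List.mem_cons] at hw
    rcases hw with rfl | hw
    · exact ⟨hv, by omega⟩
    · have := pWalk_support n _ _ _ w hw
      exact ⟨this.1, by omega⟩

lemma pWalk_chain : ∀ (n : ℕ) (v : V) (hv : v ∈ ball) (hd : d v = n),
    ((pWalk h0 hu0 hpa n v hv hd).support).Chain' (fun a b => d b < d a)
  | 0, v, hv, hd => by simp [pWalk]; exact List.isChain_singleton _
  | (n+1), v, hv, hd => by
    have hvu : v ≠ u := fun h => by rw [h, hu0] at hd; exact Nat.succ_ne_zero n hd.symm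
    rw [pWalk]
    rw [Walk.support_cons]
    rw [Walk.support_eq_cons (pWalk h0 hu0 hpa n (pa v) _ _)]
    refine List.isChain_cons_cons.mpr ⟨?_, ?_⟩
    · have := (hpa v hv hvu).2.2; omega
    · rw [← Walk.support_eq_cons]
      exact pWalk_chain n (pa v) _ _

lemma pWalk_edges : ∀ (n : ℕ) (v : V) (hv : v ∈ ball) (hd : d v = n),
    ∀ e ∈ (pWalk h0 hu0 hpa n v hv hd).edges, ∃ w, w ∈ ball ∧ w ≠ u ∧ e = s(pa w, w)
  | 0, v, hv, hd => by simp [pWalk]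
  | (n+1), v, hv, hd => by
    intro e he
    have hvu : v ≠ u := fun h => by rw [h, hu0] at hd; exact Nat.succ_ne_zero n hd.symm
    rw [pWalk] at he
    simp only [Walk.edges_cons, List.mem_cons] at he
    rcases he with rfl | he
    · exact ⟨v, hv, hvu, Sym2.eq_swap.symm⟩
    · exact pWalk_edges n (pa v) _ _ e he

lemma pWalk_isPath (n : ℕ) (v : V) (hv : v ∈ ball) (hd : d v = n) :
    (pWalk h0 hu0 hpa n v hv hd).IsPath := by
  rw [Walk.isPath_def]
  have hc := pWalk_chain h0 hu0 hpa n v hv hd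
  haveI : IsTrans V (fun a b => d b < d a) := ⟨fun _ _ _ h1 h2 => lt_trans h2 h1⟩
  have hp := List.isChain_iff_pairwise.mp hc
  exact hp.imp fun h => by rintro rfl; omega

theorem exists_witness {V : Type*} [DecidableEq V] (H : SimpleGraph V) (u : V) (g : ℕ)
    (h : ballHasCycle H u g) :
    ∃ (z : V) (p c : ℕ) (T : H.Walk u z), p ≤ g ∧ 1 ≤ c ∧ c ≤ 2*g+1 ∧
      T.length = p + c ∧ T.edges.Nodup ∧ T.getVert p = z := by
  classical
  unfold ballHasCycle at h
  unfold SimpleGraph.IsAcyclic at h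
  push_neg at h
  set ball : Set V := {v | H.Reachable u v ∧ H.dist u v ≤ g} with hballdef
  set d : V → ℕ := fun v => H.dist u v with hddef
  have hu0 : d u = 0 := SimpleGraph.dist_self
  have h0 : ∀ v ∈ ball, d v = 0 → v = u := by
    intro v hv hd
    have hv' : H.Reachable u v ∧ H.dist u v ≤ g := hv
    exact (hv'.1.dist_eq_zero_iff.mp hd).symm
  have hpar : ∀ v, v ∈ ball → v ≠ u → ∃ w, H.Adj w v ∧ w ∈ ball ∧ d w + 1 = d v := by
    intro v hv hvu
    obtain ⟨hreach, hdist⟩ : H.Reachable u v ∧ H.dist u v ≤ g := hv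
    obtain ⟨W, hW⟩ := hreach.exists_walk_length_eq_dist
    obtain ⟨w, hadj, q, hq⟩ := Walk.exists_eq_cons_of_ne hvu W.reverse
    have hlq : W.length = q.length + 1 := by
      have := congrArg Walk.length hq
      rw [Walk.length_reverse] at this
      simpa using this
    have hdw_le : d w ≤ q.length := by
      have := SimpleGraph.dist_le q.reverse
      rwa [Walk.length_reverse] at this
    have hdv_le : d v ≤ d w + 1 := by
      obtain ⟨W2, hW2⟩ := (q.reverse.reachable).exists_walk_length_eq_dist
      have := SimpleGraph.dist_le (W2.concat hadj.symm)
      rwa [Walk.length_concat, hW2] at this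
    have hlen0 : W.length ≠ 0 := fun hz => hvu (Walk.eq_of_length_eq_zero hz).symm
    refine ⟨w, hadj.symm, ?_, ?_⟩
    · show H.Reachable u w ∧ H.dist u w ≤ g
      refine ⟨q.reverse.reachable, ?_⟩
      show d w ≤ g
      have hWd : W.length = d v := hW
      have hdg : d v ≤ g := hdist
      omega
    · have hWd : W.length = d v := hW
      omega
  set pa : V → V := fun v => if hc : v ∈ ball ∧ v ≠ u then (hpar v hc.1 hc.2).choose else u
    with hpadef
  have hpa : ∀ v, v ∈ ball → v ≠ u → H.Adj (pa v) v ∧ pa v ∈ ball ∧ d (pa v) + 1 = d v := by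
    intro v hv hvu
    have hpv : pa v = (hpar v hv hvu).choose := dif_pos ⟨hv, hvu⟩
    rw [hpv]
    exact (hpar v hv hvu).choose_spec
  obtain ⟨v₀, C₀, hC₀⟩ := h
  have hinj : Function.Injective (SimpleGraph.Embedding.induce (G := H) ball).toHom :=
    Subtype.val_injective
  set C := C₀.map (SimpleGraph.Embedding.induce (G := H) ball).toHom with hCdef
  have hCcyc : C.IsCycle := hC₀.map hinj
  have hCsup : ∀ w ∈ C.support, w ∈ ball := by
    intro w hw
    rw [Walk.support_map] at hw
    obtain ⟨a, _, rfl⟩ := List.mem_map.mp hw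
    exact a.2
  -- existence of a non-tree edge on the cycle
  have hnt : ∃ e ∈ C.edges, ¬ ∃ w, w ∈ ball ∧ w ≠ u ∧ e = s(pa w, w) := by
    by_contra hall
    push_neg at hall
    set Efin : Finset (Sym2 V) := C.edges.toFinset with hEfin
    have hchoose : ∀ e : {e' // e' ∈ Efin}, ∃ w, w ∈ ball ∧ w ≠ u ∧ e.1 = s(pa w, w) :=
      fun e => hall e.1 (List.mem_toFinset.mp e.2)
    set ch : {e' // e' ∈ Efin} → V := fun e => (hchoose e).choose with hchdef
    have hch : ∀ e, ch e ∈ ball ∧ ch e ≠ u ∧ e.1 = s(pa (ch e), (ch e)) :=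
      fun e => (hchoose e).choose_spec
    set img : Finset V := Efin.attach.image ch with himgdef
    obtain ⟨x₁, hadj₁, C₁, hC1⟩ := Walk.not_nil_iff.mp hCcyc.not_nil
    have hSuppCard : (C.support.toFinset).card = C.length := by
      rw [hC1, Walk.support_cons, List.toFinset_cons]
      rw [Finset.insert_eq_self.mpr (List.mem_toFinset.mpr (Walk.end_mem_support C₁))]
      rw [List.toFinset_card_of_nodup]
      · rw [Walk.length_support, Walk.length_cons]
      · have := hCcyc.support_nodup
        rw [hC1, Walk.support_cons] at this
        simpa using this
    have hEdgeCard : Efin.card = C.length := by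
      rw [hEfin, List.toFinset_card_of_nodup hCcyc.isCircuit.isTrail.edges_nodup,
        Walk.length_edges]
    have himgcard : img.card = C.length := by
      rw [himgdef, Finset.card_image_of_injOn, Finset.card_attach, hEdgeCard]
      intro e1 _ e2 _ hee
      have h1 := (hch e1).2.2
      have h2 := (hch e2).2.2
      apply Subtype.ext
      rw [h1, h2, hee]
    have himgsub : img ⊆ C.support.toFinset := by
      intro w hw
      simp only [himgdef, Finset.mem_image, Finset.mem_attach, true_and] at hw
      obtain ⟨e, rfl⟩ := hw
      have h3 := (hch e).2.2
      exact List.mem_toFinset.mpr (C.snd_mem_support_of_mem_edges (h3 ▸ List.mem_toFinset.mp e.2))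
    have himg_eq : img = C.support.toFinset :=
      Finset.eq_of_subset_of_card_le himgsub (by omega)
    obtain ⟨m, hmS, hmin⟩ := Finset.exists_min_image (C.support.toFinset) d
      ⟨_, List.mem_toFinset.mpr (Walk.start_mem_support C)⟩
    rw [← himg_eq] at hmS
    simp only [himgdef, Finset.mem_image, Finset.mem_attach, true_and] at hmS
    obtain ⟨e, hme⟩ := hmS
    obtain ⟨hball_m, hmu, herep⟩ := hch e
    rw [hme] at hball_m hmu herep
    have hpam : pa m ∈ C.support.toFinset :=
      List.mem_toFinset.mpr (C.fst_mem_support_of_mem_edges (herep ▸ List.mem_toFinset.mp e.2))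
    have h4 := hmin (pa m) hpam
    have h5 := (hpa m hball_m hmu).2.2
    omega
  obtain ⟨e, heC, hent⟩ := hnt
  revert heC hent
  induction e using Sym2.ind with
  | _ x y =>
  intro heC hent
  have hxy : H.Adj x y := C.adj_of_mem_edges heC
  have hx : x ∈ ball := hCsup _ (C.fst_mem_support_of_mem_edges heC)
  have hy : y ∈ ball := hCsup _ (C.snd_mem_support_of_mem_edges heC)
  set Px := pWalk h0 hu0 hpa (d x) x hx rfl with hPxdef
  set Py := pWalk h0 hu0 hpa (d y) y hy rfl with hPydef
  have huPx : u ∈ Px.support := Walk.end_mem_support _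
  have huPy : u ∈ Py.support := Walk.end_mem_support _
  obtain ⟨z, hzS, hzmax⟩ := Finset.exists_max_image (Px.support.toFinset ∩ Py.support.toFinset) d
    ⟨u, Finset.mem_inter.mpr ⟨List.mem_toFinset.mpr huPx, List.mem_toFinset.mpr huPy⟩⟩
  obtain ⟨hzx, hzy⟩ := Finset.mem_inter.mp hzS
  rw [List.mem_toFinset] at hzx hzy
  have hzball : z ∈ ball := (pWalk_support h0 hu0 hpa (d x) x hx rfl z hzx).1
  set A := Px.takeUntil z hzx with hAdef
  set Bw := Py.takeUntil z hzy with hBdef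
  set R := pWalk h0 hu0 hpa (d z) z hzball rfl with hRdef
  have hRlen : R.length = d z := pWalk_length h0 hu0 hpa (d z) z hzball rfl
  set T : H.Walk u z := R.reverse.append (A.reverse.append (Walk.cons hxy Bw)) with hTdef
  -- facts
  have hPxpath : Px.IsPath := pWalk_isPath h0 hu0 hpa (d x) x hx rfl
  have hPypath : Py.IsPath := pWalk_isPath h0 hu0 hpa (d y) y hy rfl
  have hRpath : R.IsPath := pWalk_isPath h0 hu0 hpa (d z) z hzball rfl
  have hApath : A.IsPath := hPxpath.takeUntil hzx
  have hBpath : Bw.IsPath := hPypath.takeUntil hzy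
  have treeA : ∀ e' ∈ A.edges, ∃ w, w ∈ ball ∧ w ≠ u ∧ e' = s(pa w, w) := fun e' he' =>
    pWalk_edges h0 hu0 hpa (d x) x hx rfl e' (Walk.edges_takeUntil_subset _ _ he')
  have treeB : ∀ e' ∈ Bw.edges, ∃ w, w ∈ ball ∧ w ≠ u ∧ e' = s(pa w, w) := fun e' he' =>
    pWalk_edges h0 hu0 hpa (d y) y hy rfl e' (Walk.edges_takeUntil_subset _ _ he')
  have treeR : ∀ e' ∈ R.edges, ∃ w, w ∈ ball ∧ w ≠ u ∧ e' = s(pa w, w) := fun e' he' =>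
    pWalk_edges h0 hu0 hpa (d z) z hzball rfl e' he'
  have childInj : ∀ w₁ w₂, w₁ ∈ ball → w₁ ≠ u → w₂ ∈ ball → w₂ ≠ u →
      (s(pa w₁, w₁) : Sym2 V) = s(pa w₂, w₂) → w₁ = w₂ := by
    intro w₁ w₂ hb1 hu1 hb2 hu2 he
    rw [Sym2.eq_iff] at he
    rcases he with ⟨_, h⟩ | ⟨ha, hb⟩
    · exact h
    · exfalso
      have e1 := (hpa w₁ hb1 hu1).2.2
      have e2 := (hpa w₂ hb2 hu2).2.2
      rw [ha] at e1
      rw [← hb] at e2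
      omega
  have suppR : ∀ w ∈ R.support, d w ≤ d z := fun w hw =>
    (pWalk_support h0 hu0 hpa (d z) z hzball rfl w hw).2
  have prefixFact : ∀ (a : V) (W : H.Walk a u)
      (hch : W.support.Chain' (fun p q => d q < d p))
      (hzW : z ∈ W.support) (w : V), w ∈ (W.takeUntil z hzW).support → w = z ∨ d z < d w := by
    intro a W hch hzW w hw
    have hpre : (W.takeUntil z hzW).support <+: W.support :=
      ⟨(W.dropUntil z hzW).support.tail, by rw [← Walk.support_append, Walk.take_spec]⟩
    have hchain2 : (W.takeUntil z hzW).support.Chain' (fun p q => d q < d p) :=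
      hch.prefix hpre
    have hrev : ((W.takeUntil z hzW).support.reverse).Chain' (fun p q => d p < d q) := by
      show List.IsChain _ _
      rw [List.isChain_reverse]
      exact hchain2
    have hsupc : (W.takeUntil z hzW).support.reverse
        = z :: ((W.takeUntil z hzW).reverse.support.tail) := by
      rw [← Walk.support_reverse]
      exact Walk.support_eq_cons _
    rw [hsupc] at hrev
    have hwmem : w ∈ z :: ((W.takeUntil z hzW).reverse.support.tail) := by
      rw [← hsupc]
      exact List.mem_reverse.mpr hw
    rcases List.mem_cons.mp hwmem with rfl | hmem
    · exact Or.inl rfl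
    · right
      haveI : IsTrans V (fun p q => d p < d q) := ⟨fun _ _ _ h1 h2 => lt_trans h1 h2⟩
      exact List.rel_of_pairwise_cons (List.isChain_iff_pairwise.mp hrev) hmem
  have suppA : ∀ w ∈ A.support, w = z ∨ d z < d w :=
    prefixFact x Px (pWalk_chain h0 hu0 hpa (d x) x hx rfl) hzx
  have suppB : ∀ w ∈ Bw.support, w = z ∨ d z < d w :=
    prefixFact y Py (pWalk_chain h0 hu0 hpa (d y) y hy rfl) hzy
  have suppA2 : ∀ w ∈ A.support, w ∈ Py.support → w = z := by
    intro w hw hwy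
    rcases suppA w hw with rfl | hlt
    · rfl
    · exfalso
      have hwx : w ∈ Px.support := Walk.support_takeUntil_subset _ _ hw
      have hmem : w ∈ Px.support.toFinset ∩ Py.support.toFinset :=
        Finset.mem_inter.mpr ⟨List.mem_toFinset.mpr hwx, List.mem_toFinset.mpr hwy⟩
      have := hzmax w hmem
      omega
  have hzneA : ∀ (_ : z ≠ u), pa z ∈ A.support → False := by
    intro hzu hmem
    have h3 := (hpa z hzball hzu).2.2
    rcases suppA _ hmem with heq | hlt
    · rw [heq] at h3; omega
    · omega
  have hnotA : (s(x,y) : Sym2 V) ∉ A.edges := fun hmem => hent (treeA _ hmem)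
  have hnotB : (s(x,y) : Sym2 V) ∉ Bw.edges := fun hmem => hent (treeB _ hmem)
  have hnotR : (s(x,y) : Sym2 V) ∉ R.edges := fun hmem => hent (treeR _ hmem)
  have hdisjAB : ∀ e', e' ∈ A.edges → e' ∈ Bw.edges → False := by
    intro e' hea heb
    obtain ⟨w, hwb, hwu, rfl⟩ := treeA e' hea
    obtain ⟨w', hwb', hwu', hrep'⟩ := treeB _ heb
    have hww : w = w' := childInj w w' hwb hwu hwb' hwu' hrep'
    subst hww
    have hwA : w ∈ A.support := A.snd_mem_support_of_mem_edges hea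
    have hwB : w ∈ Bw.support := Bw.snd_mem_support_of_mem_edges heb
    have hwz : w = z := suppA2 w hwA (Walk.support_takeUntil_subset _ _ hwB)
    subst hwz
    exact hzneA hwu (A.fst_mem_support_of_mem_edges hea)
  have hdisjRA : ∀ e', e' ∈ R.edges → e' ∈ A.edges → False := by
    intro e' her hea
    obtain ⟨w, hwb, hwu, rfl⟩ := treeR e' her
    obtain ⟨w', hwb', hwu', hrep'⟩ := treeA _ hea
    have hww : w = w' := childInj w w' hwb hwu hwb' hwu' hrep'
    subst hww
    have hwR : w ∈ R.support := R.snd_mem_support_of_mem_edges her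
    have hwA : w ∈ A.support := A.snd_mem_support_of_mem_edges hea
    have hle : d w ≤ d z := suppR w hwR
    rcases suppA w hwA with rfl | hlt
    · exact hzneA hwu (A.fst_mem_support_of_mem_edges hea)
    · omega
  have hdisjRB : ∀ e', e' ∈ R.edges → e' ∈ Bw.edges → False := by
    intro e' her heb
    obtain ⟨w, hwb, hwu, rfl⟩ := treeR e' her
    obtain ⟨w', hwb', hwu', hrep'⟩ := treeB _ heb
    have hww : w = w' := childInj w w' hwb hwu hwb' hwu' hrep'
    subst hww
    have hwR : w ∈ R.support := R.snd_mem_support_of_mem_edges her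
    have hwB : w ∈ Bw.support := Bw.snd_mem_support_of_mem_edges heb
    have hle : d w ≤ d z := suppR w hwR
    rcases suppB w hwB with rfl | hlt
    · -- w = z : then pa z ∈ Bw.support, contradiction via suppB
      have h3 := (hpa w hwb hwu).2.2
      have hpz : pa w ∈ Bw.support := Bw.fst_mem_support_of_mem_edges heb
      rcases suppB _ hpz with heq | hlt2
      · rw [heq] at h3; omega
      · omega
    · omega
  refine ⟨z, d z, A.length + Bw.length + 1, T, ?_, ?_, ?_, ?_, ?_, ?_⟩
  · exact (hzball : H.Reachable u z ∧ H.dist u z ≤ g).2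
  · omega
  · have h1 : A.length ≤ d x := by
      have := Walk.length_takeUntil_le Px hzx
      rwa [pWalk_length h0 hu0 hpa (d x) x hx rfl] at this
    have h2 : Bw.length ≤ d y := by
      have := Walk.length_takeUntil_le Py hzy
      rwa [pWalk_length h0 hu0 hpa (d y) y hy rfl] at this
    have h3 : d x ≤ g := (hx : H.Reachable u x ∧ H.dist u x ≤ g).2
    have h4 : d y ≤ g := (hy : H.Reachable u y ∧ H.dist u y ≤ g).2
    omega
  · rw [hTdef, Walk.length_append, Walk.length_append, Walk.length_reverse,
      Walk.length_reverse, Walk.length_cons, hRlen]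
    omega
  · -- Nodup
    rw [hTdef, Walk.edges_append, Walk.edges_append, Walk.edges_cons, Walk.edges_reverse,
      Walk.edges_reverse]
    refine List.nodup_append'.mpr ⟨(List.nodup_reverse.mpr hRpath.isTrail.edges_nodup),
      List.nodup_append'.mpr ⟨(List.nodup_reverse.mpr hApath.isTrail.edges_nodup),
        List.nodup_cons.mpr ⟨hnotB, hBpath.isTrail.edges_nodup⟩, ?_⟩, ?_⟩
    · intro e' he1 he2
      rw [List.mem_reverse] at he1
      rcases List.mem_cons.mp he2 with rfl | he2'
      · exact hnotA he1
      · exact hdisjAB e' he1 he2'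
    · intro e' he1 he2
      rw [List.mem_reverse] at he1
      rcases List.mem_append.mp he2 with he2' | he2'
      · exact hdisjRA e' he1 (List.mem_reverse.mp he2')
      · rcases List.mem_cons.mp he2' with rfl | he2''
        · exact hnotR he1
        · exact hdisjRB e' he1 he2''
  · rw [hTdef, Walk.getVert_append, Walk.length_reverse, hRlen]
    simp



end Stmt14Aux

namespace Stmt14Aux

lemma edges_getElem {V : Type*} {H : SimpleGraph V} {a b : V} (W : H.Walk a b) :
    ∀ (i : ℕ) (hi : i < W.length),
      W.edges[i]'(by rw [Walk.length_edges]; exact hi) = s(W.getVert i, W.getVert (i+1)) := by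
  induction W with
  | nil => intro i hi; simp at hi
  | cons h p ih =>
    intro i hi
    cases i with
    | zero => simp [Walk.getVert_cons_succ]
    | succ i =>
      simp only [Walk.edges_cons, List.getElem_cons_succ, Walk.getVert_cons_succ]
      exact ih i (by simpa [Walk.length_cons] using hi)

lemma nat_aux : ∀ g : ℕ, 1 ≤ g → (g+1)*(2*g+1) ≤ 3 * 2 ^ (2*g - 1) := by
  intro g hg
  induction g with
  | zero => omega
  | succ n ih =>
    rcases Nat.lt_or_ge n 1 with h | h
    · interval_cases n
      · norm_num
    · have hIH := ih h
      have h2 : 2*(n+1) - 1 = (2*n-1) + 2 := by omega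
      rw [h2, pow_add]
      nlinarith [hIH, h]

variable {V : Type*} [Fintype V] [DecidableEq V]

/-- Adjacency-respecting vertex sequences of length `m` starting at `u`. -/
def Wset (G : SimpleGraph V) [DecidableRel G.Adj] (u : V) (m : ℕ) : Finset (Fin (m+1) → V) :=
  Finset.univ.filter (fun f => f 0 = u ∧ ∀ i : Fin m, G.Adj (f i.castSucc) (f i.succ))

/-- Lollipop-shaped sequences: walk of length `p+c` from `u`, closing at position `p`, with
pairwise distinct edges. -/
def Fset (G : SimpleGraph V) [DecidableRel G.Adj] (u : V) (p c : ℕ) :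
    Finset (Fin (p+c+1) → V) :=
  Finset.univ.filter (fun f => f 0 = u ∧ (∀ i : Fin (p+c), G.Adj (f i.castSucc) (f i.succ)) ∧
    f (Fin.last (p+c)) = f ⟨p, by omega⟩ ∧
    Function.Injective (fun i : Fin (p+c) => (s(f i.castSucc, f i.succ) : Sym2 V)))

lemma Wset_card_le (G : SimpleGraph V) [DecidableRel G.Adj] (u : V) (Δ : ℝ)
    (hΔ : 0 ≤ Δ) (hdeg : ∀ v : V, (G.degree v : ℝ) ≤ Δ) :
    ∀ m : ℕ, ((Wset G u m).card : ℝ) ≤ Δ ^ m := by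
  intro m
  induction m with
  | zero =>
    have hsub : Wset G u 0 ⊆ {fun _ => u} := by
      intro f hf
      simp only [Wset, Finset.mem_filter] at hf
      simp only [Finset.mem_singleton]
      funext i
      have hi : i = 0 := Fin.fin_one_eq_zero i
      rw [hi, hf.2.1]
    calc ((Wset G u 0).card : ℝ) ≤ (({fun _ => u} : Finset (Fin 1 → V)).card : ℝ) := by
          exact_mod_cast Finset.card_le_card hsub
      _ = 1 := by simp
      _ = Δ ^ 0 := by simp
  | succ m ih =>
    have hc : (Wset G u (m+1)).card ≤
        ((Wset G u m).sigma (fun h => G.neighborFinset (h (Fin.last m)))).card := by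
      apply Finset.card_le_card_of_injOn
        (fun f => ⟨fun i => f i.castSucc, f (Fin.last (m+1))⟩)
      · intro f hf
        simp only [Wset, Finset.mem_coe, Finset.mem_filter, Finset.mem_univ, true_and] at hf
        obtain ⟨hf0, hfadj⟩ := hf
        refine Finset.mem_sigma.mpr ⟨?_, ?_⟩
        · simp only [Wset, Finset.mem_filter, Finset.mem_univ, true_and]
          constructor
          · show f ((0 : Fin (m+1)).castSucc) = u
            rw [Fin.castSucc_zero]
            exact hf0
          · intro i
            have := hfadj i.castSucc
            rwa [Fin.succ_castSucc] at this
        · rw [SimpleGraph.mem_neighborFinset]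
          have := hfadj (Fin.last m)
          rwa [Fin.succ_last] at this
      · intro f1 _ f2 _ heq
        have ha := congrArg Sigma.fst heq
        have hb := congrArg (fun s : (_ : Fin (m+1) → V) × V => s.snd) heq
        simp only at ha hb
        funext j
        refine Fin.lastCases ?_ ?_ j
        · exact hb
        · intro i
          exact congrFun ha i
    calc ((Wset G u (m+1)).card : ℝ)
        ≤ (((Wset G u m).sigma (fun h => G.neighborFinset (h (Fin.last m)))).card : ℝ) := by
          exact_mod_cast hc
      _ = ∑ h ∈ Wset G u m, (G.degree (h (Fin.last m)) : ℝ) := by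
          rw [Finset.card_sigma]
          push_cast [SimpleGraph.card_neighborFinset_eq_degree]
          rfl
      _ ≤ ∑ _h ∈ Wset G u m, Δ := Finset.sum_le_sum (fun h _ => hdeg _)
      _ = ((Wset G u m).card : ℝ) * Δ := by rw [Finset.sum_const, nsmul_eq_mul]
      _ ≤ Δ ^ m * Δ := mul_le_mul_of_nonneg_right ih hΔ
      _ = Δ ^ (m+1) := (pow_succ Δ m).symm

lemma Fset_card_le (G : SimpleGraph V) [DecidableRel G.Adj] (u : V) (p c' : ℕ) :
    (Fset G u p (c'+1)).card ≤ (Wset G u (p+c')).card := by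
  apply Finset.card_le_card_of_injOn (fun f => (fun i => f i.castSucc : Fin (p+c'+1) → V))
  · intro f hf
    simp only [Fset, Finset.mem_coe, Finset.mem_filter, Finset.mem_univ, true_and] at hf
    obtain ⟨hf0, hfadj, _, _⟩ := hf
    simp only [Wset, Finset.mem_coe, Finset.mem_filter, Finset.mem_univ, true_and]
    constructor
    · show f ((0 : Fin (p+c'+1)).castSucc) = u
      rw [Fin.castSucc_zero]
      exact hf0
    · intro i
      have := hfadj i.castSucc
      rwa [Fin.succ_castSucc] at this
  · intro f1 h1 f2 h2 heq
    replace h1 := Finset.mem_coe.mp h1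
    replace h2 := Finset.mem_coe.mp h2
    simp only [Fset, Finset.mem_filter, Finset.mem_univ, true_and] at h1 h2
    funext j
    refine Fin.lastCases ?_ (fun i => congrFun heq i) j
    · rw [h1.2.2.1, h2.2.2.1]
      have hcast : (⟨p, by omega⟩ : Fin (p+(c'+1)+1))
          = (⟨p, by omega⟩ : Fin (p+c'+1)).castSucc := by
        apply Fin.ext
        simp
      rw [hcast]
      exact congrFun heq _

end Stmt14Aux

open Stmt14Aux in
theorem stmt_14 {V : Type*} [Fintype V] [DecidableEq V]
    (G : SimpleGraph V) [DecidableRel G.Adj]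
    {Ω : Type*} [MeasurableSpace Ω] (μ : Measure Ω) [IsProbabilityMeasure μ]
    (D Δ : ℝ) (hD2 : 2 ≤ D) (hDΔ : D ≤ Δ)
    (hdeg : ∀ u : V, (G.degree u : ℝ) ≤ Δ)
    (B : Sym2 V → Ω → Bool)
    (hmeas : ∀ e, Measurable (B e))
    (hindep : iIndepFun
      (fun e : G.edgeSet => B e) μ)
    (hdist : ∀ e ∈ G.edgeSet, μ {ω | B e ω = true} = ENNReal.ofReal (D / Δ)) :
    ∀ u : V, ∀ g : ℕ, 1 ≤ g →
      μ {ω | ballHasCycle (keptSubgraph G B ω) u g} ≤ ENNReal.ofReal (3 * D ^ (5 * g) / Δ) := by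
  intro u g hg
  classical
  have hDpos : (0:ℝ) < D := lt_of_lt_of_le (by norm_num) hD2
  have hΔpos : (0:ℝ) < Δ := lt_of_lt_of_le hDpos hDΔ
  have hΔne : Δ ≠ 0 := ne_of_gt hΔpos
  set q : ℝ≥0∞ := ENNReal.ofReal (D / Δ) with hq
  set P : Finset (ℕ × ℕ) := (Finset.range (g+1)) ×ˢ (Finset.Icc 1 (2*g+1)) with hP
  set Ev : (k : ℕ) → (Fin (k+1) → V) → Set Ω :=
    fun k f => {ω | ∀ i : Fin k, B s(f i.castSucc, f i.succ) ω = true} with hEv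
  -- step 1 : inclusion in the union of atomic events
  have hsub : {ω | ballHasCycle (keptSubgraph G B ω) u g} ⊆
      ⋃ i ∈ P.sigma (fun pc => Fset G u pc.1 pc.2), Ev (i.1.1 + i.1.2) i.2 := by
    intro ω hω
    obtain ⟨z, p, c, T, hp, hc1, hc2, hlen, hnd, hgv⟩ :=
      Stmt14Aux.exists_witness (keptSubgraph G B ω) u g hω
    have hHsub : ∀ a b : V, (keptSubgraph G B ω).Adj a b → G.Adj a b ∧ B s(a,b) ω = true := by
      intro a b hab
      rw [keptSubgraph, SimpleGraph.fromEdgeSet_adj] at hab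
      exact ⟨(SimpleGraph.mem_edgeSet G).mp hab.1.1, hab.1.2⟩
    have hTadj : ∀ i : ℕ, i < p + c →
        (keptSubgraph G B ω).Adj (T.getVert i) (T.getVert (i+1)) := by
      intro i hi
      exact T.adj_getVert_succ (by omega)
    set f : Fin (p+c+1) → V := fun i => T.getVert i with hfdef
    have hfi : ∀ i : Fin (p+c), f i.castSucc = T.getVert i ∧ f i.succ = T.getVert (i+1) := by
      intro i
      constructor
      · show T.getVert ((i.castSucc : Fin (p+c+1)) : ℕ) = T.getVert i
        rw [Fin.coe_castSucc]
      · show T.getVert ((i.succ : Fin (p+c+1)) : ℕ) = T.getVert (i+1)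
        rw [Fin.val_succ]
    have hGadj : ∀ i : Fin (p+c), G.Adj (f i.castSucc) (f i.succ) := by
      intro i
      rw [(hfi i).1, (hfi i).2]
      exact (hHsub _ _ (hTadj i i.isLt)).1
    have hfF : f ∈ Fset G u p c := by
      simp only [Fset, Finset.mem_filter, Finset.mem_univ, true_and]
      refine ⟨?_, hGadj, ?_, ?_⟩
      · show T.getVert ((0 : Fin (p+c+1)) : ℕ) = u
        simp [SimpleGraph.Walk.getVert_zero]
      · show T.getVert ((Fin.last (p+c) : Fin (p+c+1)) : ℕ)
          = T.getVert ((⟨p, by omega⟩ : Fin (p+c+1)) : ℕ)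
        rw [Fin.val_last]
        show T.getVert (p+c) = T.getVert p
        rw [hgv, ← hlen, SimpleGraph.Walk.getVert_length]
      · intro i j hij
        simp only at hij
        rw [(hfi i).1, (hfi i).2, (hfi j).1, (hfi j).2] at hij
        have hi' : (i : ℕ) < T.length := by rw [hlen]; exact i.isLt
        have hj' : (j : ℕ) < T.length := by rw [hlen]; exact j.isLt
        rw [← edges_getElem T i hi', ← edges_getElem T j hj'] at hij
        exact Fin.ext (hnd.getElem_inj_iff.mp hij)
    refine Set.mem_iUnion₂.mpr ⟨⟨(p, c), f⟩, ?_, ?_⟩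
    · refine Finset.mem_sigma.mpr ⟨?_, hfF⟩
      refine Finset.mem_product.mpr ⟨?_, ?_⟩
      · simp only [Finset.mem_range]; omega
      · simp only [Finset.mem_Icc]; omega
    · intro i
      show B s(f i.castSucc, f i.succ) ω = true
      rw [(hfi i).1, (hfi i).2]
      exact (hHsub _ _ (hTadj i i.isLt)).2
  -- step 2 : measure of an atomic event
  have hmeasEv : ∀ p c : ℕ, ∀ f ∈ Fset G u p c, μ (Ev (p+c) f) = q ^ (p+c) := by
    intro p c f hf
    simp only [Fset, Finset.mem_filter, Finset.mem_univ, true_and] at hf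
    obtain ⟨hf0, hfadj, hflast, hfinj⟩ := hf
    set eh : Fin (p+c) → G.edgeSet :=
      fun i => ⟨s(f i.castSucc, f i.succ), (SimpleGraph.mem_edgeSet G).mpr (hfadj i)⟩ with hehdef
    have hehinj : Function.Injective eh := by
      intro i j hij
      apply hfinj
      exact congrArg Subtype.val hij
    have hEq : Ev (p+c) f
        = ⋂ e ∈ Finset.image eh Finset.univ, (B (e : Sym2 V)) ⁻¹' {true} := by
      ext ω
      simp only [hEv, Set.mem_setOf_eq, Set.mem_iInter, Finset.mem_image, Finset.mem_univ,
        true_and, Set.mem_preimage, Set.mem_singleton_iff]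
      constructor
      · rintro h e ⟨i, rfl⟩
        exact h i
      · intro h i
        exact h (eh i) ⟨i, rfl⟩
    rw [hEq]
    rw [hindep.meas_biInter (fun e _ => ⟨{true}, MeasurableSpace.measurableSet_top, rfl⟩)]
    have hpre : ∀ e : G.edgeSet, μ ((B (e : Sym2 V)) ⁻¹' {true}) = q := by
      intro e
      have : (B (e : Sym2 V)) ⁻¹' {true} = {ω | B (e : Sym2 V) ω = true} := by
        ext ω; simp
      rw [this]
      exact hdist e.1 e.2
    rw [Finset.prod_congr rfl (fun e _ => hpre e)]
    rw [Finset.prod_const]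
    rw [Finset.card_image_of_injective _ hehinj, Finset.card_univ, Fintype.card_fin]
  -- step 3 : put it together
  calc μ {ω | ballHasCycle (keptSubgraph G B ω) u g}
      ≤ μ (⋃ i ∈ P.sigma (fun pc => Fset G u pc.1 pc.2), Ev (i.1.1 + i.1.2) i.2) :=
        measure_mono hsub
    _ ≤ ∑ i ∈ P.sigma (fun pc => Fset G u pc.1 pc.2), μ (Ev (i.1.1 + i.1.2) i.2) :=
        measure_biUnion_finset_le _ _
    _ = ∑ pc ∈ P, ∑ f ∈ Fset G u pc.1 pc.2, μ (Ev (pc.1 + pc.2) f) := by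
        rw [Finset.sum_sigma]
    _ ≤ ∑ pc ∈ P, ENNReal.ofReal (D ^ (pc.1 + pc.2) / Δ) := by
        apply Finset.sum_le_sum
        rintro ⟨p, c⟩ hpc
        obtain ⟨hp1, hp2⟩ := Finset.mem_product.mp hpc
        rw [Finset.mem_Icc] at hp2
        obtain ⟨c', rfl⟩ : ∃ c', c = c' + 1 := ⟨c - 1, by omega⟩
        rw [Finset.sum_congr rfl (fun f hf => hmeasEv p (c'+1) f hf), Finset.sum_const,
          nsmul_eq_mul]
        have hcard : ((Fset G u p (c'+1)).card : ℝ) ≤ Δ ^ (p + c') :=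
          le_trans (Nat.cast_le.mpr (Fset_card_le G u p c'))
            (Wset_card_le G u Δ (le_of_lt hΔpos) hdeg (p+c'))
        have h1 : ((Fset G u p (c'+1)).card : ℝ≥0∞)
            = ENNReal.ofReal ((Fset G u p (c'+1)).card : ℝ) := by
          rw [ENNReal.ofReal_natCast]
        have h2 : q ^ (p + (c'+1)) = ENNReal.ofReal ((D/Δ) ^ (p + c' + 1)) := by
          rw [hq, ← ENNReal.ofReal_pow (by positivity)]
          rfl
        rw [h1, h2, ← ENNReal.ofReal_mul (by positivity)]
        apply ENNReal.ofReal_le_ofReal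
        have step : ((Fset G u p (c'+1)).card : ℝ) * (D/Δ) ^ (p+c'+1)
            ≤ Δ ^ (p+c') * (D/Δ) ^ (p+c'+1) :=
          mul_le_mul_of_nonneg_right hcard (by positivity)
        refine le_trans step (le_of_eq ?_)
        rw [div_pow]
        rw [pow_succ Δ (p+c')]
        field_simp
        ring
    _ = ENNReal.ofReal (∑ pc ∈ P, D ^ (pc.1 + pc.2) / Δ) := by
        rw [ENNReal.ofReal_sum_of_nonneg (fun pc _ => by positivity)]
    _ ≤ ENNReal.ofReal (3 * D ^ (5 * g) / Δ) := by
        apply ENNReal.ofReal_le_ofReal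
        have hterm : ∀ pc ∈ P, D ^ (pc.1 + pc.2) / Δ ≤ D ^ (3*g+1) / Δ := by
          rintro ⟨p, c⟩ hpc
          obtain ⟨hp1, hp2⟩ := Finset.mem_product.mp hpc
          rw [Finset.mem_range] at hp1
          rw [Finset.mem_Icc] at hp2
          have hp1' : p < g + 1 := by simpa using hp1
          have hp2' : c ≤ 2*g+1 := by simpa using hp2.2
          show D ^ (p + c) / Δ ≤ D ^ (3*g+1) / Δ
          have hpow : D ^ (p + c) ≤ D ^ (3*g+1) := by
            apply pow_le_pow_right₀ (by linarith) (by omega)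
          exact (div_le_div_iff_of_pos_right hΔpos).mpr hpow
        have hPcard : P.card = (g+1) * (2*g+1) := by
          rw [hP, Finset.card_product, Finset.card_range, Nat.card_Icc]
          simp
        obtain ⟨m, hm⟩ : ∃ m, 2*g = m + 1 := ⟨2*g - 1, by omega⟩
        have hnat : (g+1)*(2*g+1) ≤ 3 * 2 ^ m := by
          have hh := nat_aux g hg
          rwa [show 2*g-1 = m by omega] at hh
        have h2D : (2:ℝ) ^ m ≤ D ^ m := pow_le_pow_left₀ (by norm_num) hD2 m
        have hfin : (((g+1) * (2*g+1) : ℕ) : ℝ) * D ^ (3*g+1) ≤ 3 * D ^ (5*g) := by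
          have hcast : (((g+1) * (2*g+1) : ℕ) : ℝ) ≤ 3 * 2 ^ m := by exact_mod_cast hnat
          calc (((g+1) * (2*g+1) : ℕ) : ℝ) * D ^ (3*g+1)
              ≤ (3 * 2 ^ m) * D ^ (3*g+1) :=
                mul_le_mul_of_nonneg_right hcast (by positivity)
            _ ≤ (3 * D ^ m) * D ^ (3*g+1) := by
                have h3 := mul_le_mul_of_nonneg_left h2D (by norm_num : (0:ℝ) ≤ 3)
                exact mul_le_mul_of_nonneg_right h3 (by positivity)
            _ = 3 * D ^ (5*g) := by
                rw [show 5*g = m + (3*g+1) by omega, pow_add]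
                ring
        calc ∑ pc ∈ P, D ^ (pc.1+pc.2)/Δ
            ≤ ∑ _pc ∈ P, D ^ (3*g+1)/Δ := Finset.sum_le_sum hterm
          _ = (P.card : ℝ) * (D ^ (3*g+1)/Δ) := by rw [Finset.sum_const, nsmul_eq_mul]
          _ ≤ 3 * D ^ (5*g) / Δ := by
              rw [hPcard, ← mul_div_assoc]
              exact (div_le_div_iff_of_pos_right hΔpos).mpr hfin
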